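/- Riesz–Herz equivalence: there exist constants c, C > 0 depending only on n such that for every locally integrable function u on ℝⁿ and all t > 0, c·u**(t) ≤ (Mu)*(t) ≤ C·u**(t), where u**(t) = (1/t)∫₀ᵗ u*(s) ds, u* is the decreasing rearrangement, and M is the uncentered maximal operator over cubes. -/

import Mathlib

open MeasureTheory Set Filter
open scoped Topology ENNReal

noncomputable section

/-- Decreasing rearrangement of an `ℝ≥0∞`-valued function. -/
noncomputable def rearrE {α : Type*} [MeasurableSpace α] (μ : MeasureTheory.Measure α)
    (u : α → ENNReal) (t : ℝ) : ENNReal :=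
  sInf {s : ENNReal | μ {x | s < u x} ≤ ENNReal.ofReal t}

/-- Decreasing rearrangement of a real-valued function (with `inf ∅ = ∞`). -/
noncomputable def rearr {α : Type*} [MeasurableSpace α] (μ : MeasureTheory.Measure α)
    (u : α → ℝ) (t : ℝ) : ENNReal :=
  rearrE μ (fun x => ENNReal.ofReal |u x|) t
/-- The uncentered maximal operator over cubes (= balls of the sup-norm on `Fin n → ℝ`). -/
noncomputable def maxOp {n : ℕ} (u : (Fin n → ℝ) → ℝ) (x : Fin n → ℝ) : ENNReal :=
  ⨆ (c : Fin n → ℝ) (r : ℝ) (_ : 0 < r) (_ : x ∈ Metric.ball c r),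
    (MeasureTheory.volume (Metric.ball c r))⁻¹ *
      ∫⁻ y in Metric.ball c r, ENNReal.ofReal |u y|

namespace RieszHerz

open ENNReal Topology

variable {α : Type*} [MeasurableSpace α]

lemma distr_anti (μ : Measure α) (g : α → ENNReal) :
    Antitone (fun s => μ {x | s < g x}) :=
  fun _ _ hab => measure_mono (fun _ hx => lt_of_le_of_lt hab hx)

lemma rearrE_anti (μ : Measure α) (g : α → ENNReal) : Antitone (fun t => rearrE μ g t) := by
  intro s t hst
  exact sInf_le_sInf (fun a ha => ha.trans (ENNReal.ofReal_le_ofReal hst))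

/-- The infimum in the definition of the rearrangement is "attained":
`μ {g > g*(t)} ≤ t`. -/
lemma distr_rearrE_le (μ : Measure α) (g : α → ENNReal) (t : ℝ) :
    μ {x | rearrE μ g t < g x} ≤ ENNReal.ofReal t := by
  set S : Set ENNReal := {s : ENNReal | μ {x | s < g x} ≤ ENNReal.ofReal t} with hS
  have hSne : S.Nonempty := by
    refine ⟨⊤, ?_⟩
    have he : {x | (⊤:ENNReal) < g x} = (∅ : Set α) := by
      ext x; simp
    show μ {x | ⊤ < g x} ≤ ENNReal.ofReal t
    simp [he]
  obtain ⟨u, hu_anti, hu_tend, hu_mem⟩ := exists_seq_tendsto_sInf hSne (OrderBot.bddBelow S)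
  have hsub : {x | rearrE μ g t < g x} ⊆ ⋃ k, {x | u k < g x} := by
    intro x hx
    have : ∀ᶠ k in atTop, u k < g x := (tendsto_order.1 hu_tend).2 _ hx
    obtain ⟨k, hk⟩ := this.exists
    exact mem_iUnion.2 ⟨k, hk⟩
  calc μ {x | rearrE μ g t < g x} ≤ μ (⋃ k, {x | u k < g x}) := measure_mono hsub
    _ = ⨆ k, μ {x | u k < g x} := by
        apply Directed.measure_iUnion
        intro a b
        rcases le_total a b with h | h
        · exact ⟨b, fun x hx => lt_of_le_of_lt (hu_anti h) hx, subset_rfl⟩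
        · exact ⟨a, subset_rfl, fun x hx => lt_of_le_of_lt (hu_anti h) hx⟩
    _ ≤ ENNReal.ofReal t := iSup_le (fun k => hu_mem k)

/-- `g*` is equimeasurable with `g`. -/
lemma equimeasurable (μ : Measure α) (g : α → ENNReal) (lam : ENNReal) :
    volume {s : ℝ | 0 < s ∧ lam < rearrE μ g s} = μ {x | lam < g x} := by
  have key : ∀ s : ℝ, 0 < s → (rearrE μ g s ≤ lam ↔ μ {x | lam < g x} ≤ ENNReal.ofReal s) := by
    intro s _hs
    constructor
    · intro h
      exact le_trans (distr_anti μ g h) (distr_rearrE_le μ g s)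
    · intro h
      exact sInf_le h
  have hset : {s : ℝ | 0 < s ∧ lam < rearrE μ g s}
      = {s : ℝ | 0 < s ∧ ENNReal.ofReal s < μ {x | lam < g x}} := by
    ext s
    simp only [mem_setOf_eq]
    constructor
    · rintro ⟨hs, h⟩
      refine ⟨hs, ?_⟩
      by_contra hc
      exact absurd ((key s hs).2 (not_lt.1 hc)) (not_le.2 h)
    · rintro ⟨hs, h⟩
      refine ⟨hs, ?_⟩
      by_contra hc
      exact absurd ((key s hs).1 (not_lt.1 hc)) (not_le.2 h)
  rw [hset]
  rcases eq_or_ne (μ {x | lam < g x}) ∞ with htop | htop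
  · rw [htop]
    have : {s : ℝ | 0 < s ∧ ENNReal.ofReal s < ∞} = Ioi (0:ℝ) := by
      ext s; simp [ENNReal.ofReal_lt_top]
    rw [this, Real.volume_Ioi]
  · have : {s : ℝ | 0 < s ∧ ENNReal.ofReal s < μ {x | lam < g x}}
        = Ioo 0 ((μ {x | lam < g x}).toReal) := by
      ext s
      simp only [mem_setOf_eq, mem_Ioo]
      constructor
      · rintro ⟨hs, h⟩
        exact ⟨hs, (ENNReal.ofReal_lt_iff_lt_toReal hs.le htop).1 h⟩
      · rintro ⟨hs, h⟩
        exact ⟨hs, (ENNReal.ofReal_lt_iff_lt_toReal hs.le htop).2 h⟩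
    rw [this, Real.volume_Ioo, sub_zero, ENNReal.ofReal_toReal htop]

lemma vol_pos_lt (a : ENNReal) :
    volume {b : ℝ | 0 < b ∧ ENNReal.ofReal b < a} = a := by
  rcases eq_or_ne a ∞ with rfl | ha
  · have : {b : ℝ | 0 < b ∧ ENNReal.ofReal b < ∞} = Ioi (0:ℝ) := by
      ext b; simp [ENNReal.ofReal_lt_top]
    rw [this, Real.volume_Ioi]
  · have : {b : ℝ | 0 < b ∧ ENNReal.ofReal b < a} = Ioo 0 a.toReal := by
      ext b
      simp only [mem_setOf_eq, mem_Ioo]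
      exact ⟨fun ⟨hb, h⟩ => ⟨hb, (ENNReal.ofReal_lt_iff_lt_toReal hb.le ha).1 h⟩,
        fun ⟨hb, h⟩ => ⟨hb, (ENNReal.ofReal_lt_iff_lt_toReal hb.le ha).2 h⟩⟩
    rw [this, Real.volume_Ioo, sub_zero, ENNReal.ofReal_toReal ha]

/-- Layer cake formula for `ℝ≥0∞`-valued functions. -/
lemma layercake (μ : Measure α) [SigmaFinite μ] {h : α → ENNReal} (hm : Measurable h) :
    ∫⁻ x, h x ∂μ = ∫⁻ b in Ioi (0:ℝ), μ {x | ENNReal.ofReal b < h x} := by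
  have mset : MeasurableSet {p : α × ℝ | ENNReal.ofReal p.2 < h p.1} :=
    measurableSet_lt (ENNReal.measurable_ofReal.comp measurable_snd) (hm.comp measurable_fst)
  have swap := lintegral_lintegral_swap (μ := μ) (ν := volume.restrict (Ioi (0:ℝ)))
    (f := fun x b => {p : α × ℝ | ENNReal.ofReal p.2 < h p.1}.indicator (1 : α × ℝ → ENNReal) (x, b))
    ?_
  · calc ∫⁻ x, h x ∂μ
        = ∫⁻ x, (∫⁻ b in Ioi (0:ℝ),
            {p : α × ℝ | ENNReal.ofReal p.2 < h p.1}.indicator (1 : α × ℝ → ENNReal) (x, b)) ∂μ := by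
          apply lintegral_congr
          intro x
          have hms : MeasurableSet {b : ℝ | ENNReal.ofReal b < h x} :=
            measurableSet_lt ENNReal.measurable_ofReal measurable_const
          have : (fun b => {p : α × ℝ | ENNReal.ofReal p.2 < h p.1}.indicator
              (1 : α × ℝ → ENNReal) (x, b))
              = {b : ℝ | ENNReal.ofReal b < h x}.indicator (fun _ => (1:ENNReal)) := by
            ext b
            by_cases hb : ENNReal.ofReal b < h x
            · simp [Set.indicator_of_mem, hb, Set.mem_setOf_eq]
            · simp [Set.indicator_of_notMem, hb, Set.mem_setOf_eq]
          rw [this, lintegral_indicator hms, setLIntegral_one, Measure.restrict_apply hms]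
          have : {b : ℝ | ENNReal.ofReal b < h x} ∩ Ioi 0
              = {b : ℝ | 0 < b ∧ ENNReal.ofReal b < h x} := by
            ext b; simp [mem_setOf_eq, and_comm]
          rw [this, vol_pos_lt]
      _ = ∫⁻ b in Ioi (0:ℝ), ∫⁻ x,
            {p : α × ℝ | ENNReal.ofReal p.2 < h p.1}.indicator (1 : α × ℝ → ENNReal) (x, b) ∂μ := swap
      _ = ∫⁻ b in Ioi (0:ℝ), μ {x | ENNReal.ofReal b < h x} := by
          apply lintegral_congr
          intro b
          have hms : MeasurableSet {x : α | ENNReal.ofReal b < h x} :=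
            measurableSet_lt measurable_const hm
          have : (fun x => {p : α × ℝ | ENNReal.ofReal p.2 < h p.1}.indicator
              (1 : α × ℝ → ENNReal) (x, b))
              = {x : α | ENNReal.ofReal b < h x}.indicator (fun _ => (1:ENNReal)) := by
            ext x
            by_cases hb : ENNReal.ofReal b < h x
            · simp [Set.indicator_of_mem, hb, Set.mem_setOf_eq]
            · simp [Set.indicator_of_notMem, hb, Set.mem_setOf_eq]
          rw [this, lintegral_indicator hms, setLIntegral_one]
  · exact (measurable_one.indicator mset).aemeasurable


lemma rearrE_congr {μ : Measure α} {g₁ g₂ : α → ENNReal} (h : g₁ =ᵐ[μ] g₂) :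
    rearrE μ g₁ = rearrE μ g₂ := by
  funext t
  unfold rearrE
  have : ∀ s : ENNReal, μ {x | s < g₁ x} = μ {x | s < g₂ x} := by
    intro s
    apply measure_congr
    filter_upwards [h] with x hx
    show (s < g₁ x) = (s < g₂ x)
    rw [hx]
  congr 1
  ext s
  simp only [Set.mem_setOf_eq, this]

section Dim

variable {n : ℕ}

/-- The maximal operator for `ℝ≥0∞`-valued functions. -/
def MOpE (g : (Fin n → ℝ) → ENNReal) (x : Fin n → ℝ) : ENNReal :=
  ⨆ (c : Fin n → ℝ) (r : ℝ) (_ : 0 < r) (_ : x ∈ Metric.ball c r),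
    (volume (Metric.ball c r))⁻¹ * ∫⁻ y in Metric.ball c r, g y

lemma maxOp_eq (u : (Fin n → ℝ) → ℝ) : maxOp u = MOpE (fun x => ENNReal.ofReal |u x|) := rfl

lemma MOpE_congr {g₁ g₂ : (Fin n → ℝ) → ENNReal} (h : g₁ =ᵐ[volume] g₂) :
    MOpE g₁ = MOpE g₂ := by
  funext x
  unfold MOpE
  refine iSup_congr fun c => iSup_congr fun r => iSup_congr fun hr => iSup_congr fun hx => ?_
  rw [lintegral_congr_ae (ae_restrict_of_ae h)]

lemma term_le_MOpE (g : (Fin n → ℝ) → ENNReal) {c : Fin n → ℝ} {r : ℝ} {x : Fin n → ℝ}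
    (hr : 0 < r) (hx : x ∈ Metric.ball c r) :
    (volume (Metric.ball c r))⁻¹ * ∫⁻ y in Metric.ball c r, g y ≤ MOpE g x :=
  le_iSup_of_le c (le_iSup_of_le r (le_iSup_of_le hr (le_iSup_of_le hx le_rfl)))

lemma isOpen_MOpE_lt (g : (Fin n → ℝ) → ENNReal) (s : ENNReal) :
    IsOpen {x | s < MOpE g x} := by
  rw [isOpen_iff_forall_mem_open]
  intro x hx
  simp only [Set.mem_setOf_eq, MOpE, lt_iSup_iff] at hx
  obtain ⟨c, r, hr, hxb, hlt⟩ := hx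
  refine ⟨Metric.ball c r, fun y hy => ?_, Metric.isOpen_ball, hxb⟩
  exact lt_of_lt_of_le hlt (term_le_MOpE g hr hy)

lemma measurable_MOpE (g : (Fin n → ℝ) → ENNReal) : Measurable (MOpE g) :=
  measurable_of_Ioi fun s => (isOpen_MOpE_lt g s).measurableSet

lemma vol_ball (c : Fin n → ℝ) {r : ℝ} (hr : 0 < r) :
    volume (Metric.ball c r) = ENNReal.ofReal ((2*r)^n) := by
  simpa using Real.volume_pi_ball c hr

lemma vol_cB (c : Fin n → ℝ) {r : ℝ} (hr : 0 ≤ r) :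
    volume (Metric.closedBall c r) = ENNReal.ofReal ((2*r)^n) := by
  simpa using Real.volume_pi_closedBall c hr

lemma vol_ball_pos (c : Fin n → ℝ) {r : ℝ} (hr : 0 < r) :
    0 < volume (Metric.ball c r) := by
  rw [vol_ball c hr]
  have : (0:ℝ) < (2*r)^n := pow_pos (by linarith) n
  exact ENNReal.ofReal_pos.2 this

lemma vol_ball_lt_top (c : Fin n → ℝ) {r : ℝ} (hr : 0 < r) :
    volume (Metric.ball c r) < ⊤ := by
  rw [vol_ball c hr]; exact ENNReal.ofReal_lt_top

lemma MOpE_le_const_add (g b : (Fin n → ℝ) → ENNReal) (lam0 : ENNReal)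
    (hgb : ∀ x, g x ≤ lam0 + b x) (x : Fin n → ℝ) :
    MOpE g x ≤ lam0 + MOpE b x := by
  refine iSup_le fun c => iSup_le fun r => iSup_le fun hr => iSup_le fun hx => ?_
  have hv0 : volume (Metric.ball c r) ≠ 0 := (vol_ball_pos c hr).ne'
  have hvt : volume (Metric.ball c r) ≠ ⊤ := (vol_ball_lt_top c hr).ne
  calc (volume (Metric.ball c r))⁻¹ * ∫⁻ y in Metric.ball c r, g y
      ≤ (volume (Metric.ball c r))⁻¹ * ∫⁻ y in Metric.ball c r, (lam0 + b y) :=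
        mul_le_mul' le_rfl (lintegral_mono fun y => hgb y)
    _ = (volume (Metric.ball c r))⁻¹ *
        (lam0 * volume (Metric.ball c r) + ∫⁻ y in Metric.ball c r, b y) := by
        rw [lintegral_add_left measurable_const, setLIntegral_const]
    _ = lam0 + (volume (Metric.ball c r))⁻¹ * ∫⁻ y in Metric.ball c r, b y := by
        rw [mul_add, mul_comm lam0, ← mul_assoc, ENNReal.inv_mul_cancel hv0 hvt, one_mul]
    _ ≤ lam0 + MOpE b x := add_le_add le_rfl (term_le_MOpE b hr hx)


lemma besicovitch_le {N : ℕ} {τ : ℝ} (hτ : 1 < τ)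
    (hN : IsEmpty (Besicovitch.SatelliteConfig (Fin n → ℝ) N τ))
    (ν₁ ν₂ : Measure (Fin n → ℝ)) (K : ENNReal) (A E : Set (Fin n → ℝ))
    (r : (Fin n → ℝ) → ℝ) (Rb : ℝ)
    (hr : ∀ x ∈ A, 0 < r x ∧ r x ≤ Rb)
    (hsub : ∀ x ∈ A, Metric.closedBall x (r x) ⊆ E)
    (hK : ∀ x ∈ A, ν₁ (Metric.closedBall x (r x)) ≤ K * ν₂ (Metric.closedBall x (r x))) :
    ν₁ A ≤ N * K * ν₂ E := by
  classical
  let q : Besicovitch.BallPackage A (Fin n → ℝ) :=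
    { c := Subtype.val, r := fun x => r x.val, rpos := fun x => (hr x.val x.2).1,
      r_bound := Rb, r_le := fun x => (hr x.val x.2).2 }
  obtain ⟨s, hs_disj, hs_cov⟩ := Besicovitch.exist_disjoint_covering_families hτ hN q
  have cover : A ⊆ ⋃ j : Fin N, ⋃ i ∈ s j, Metric.closedBall (q.c i) (q.r i) := by
    intro x hx
    have hmem : x ∈ Set.range q.c := ⟨⟨x, hx⟩, rfl⟩
    have := hs_cov hmem
    simp only [Set.mem_iUnion] at this ⊢
    obtain ⟨j, i, hi, hball⟩ := this
    exact ⟨j, i, hi, Metric.ball_subset_closedBall hball⟩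
  have hcnt : ∀ j, (s j).Countable := by
    intro j
    apply (hs_disj j).countable_of_nonempty_interior
    intro i _
    refine ⟨q.c i, ?_⟩
    have hb : Metric.ball (q.c i) (q.r i) ⊆ interior (Metric.closedBall (q.c i) (q.r i)) :=
      interior_maximal Metric.ball_subset_closedBall Metric.isOpen_ball
    exact hb (Metric.mem_ball_self (q.rpos i))
  calc ν₁ A ≤ ν₁ (⋃ j : Fin N, ⋃ i ∈ s j, Metric.closedBall (q.c i) (q.r i)) :=
        measure_mono cover
    _ ≤ ∑' j : Fin N, ν₁ (⋃ i ∈ s j, Metric.closedBall (q.c i) (q.r i)) :=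
        measure_iUnion_le _
    _ ≤ ∑' _j : Fin N, (K * ν₂ E) := by
        apply ENNReal.tsum_le_tsum
        intro j
        calc ν₁ (⋃ i ∈ s j, Metric.closedBall (q.c i) (q.r i))
            ≤ ∑' i : (s j), ν₁ (Metric.closedBall (q.c i.val) (q.r i.val)) :=
              measure_biUnion_le ν₁ (hcnt j) _
          _ ≤ ∑' i : (s j), K * ν₂ (Metric.closedBall (q.c i.val) (q.r i.val)) :=
              ENNReal.tsum_le_tsum fun i => hK i.val.val i.val.2
          _ = K * ∑' i : (s j), ν₂ (Metric.closedBall (q.c i.val) (q.r i.val)) :=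
              ENNReal.tsum_mul_left
          _ = K * ν₂ (⋃ i ∈ s j, Metric.closedBall (q.c i) (q.r i)) := by
              rw [measure_biUnion (hcnt j) (hs_disj j)
                (fun i _ => measurableSet_closedBall)]
          _ ≤ K * ν₂ E := by
              refine mul_le_mul' le_rfl (measure_mono ?_)
              exact Set.iUnion₂_subset fun i hi => hsub i.val i.2
    _ = N * K * ν₂ E := by
        rw [tsum_fintype]
        simp [Finset.sum_const, Finset.card_univ, nsmul_eq_mul, mul_assoc]


lemma cB_avg_le_MOpE (g : (Fin n → ℝ) → ENNReal) {x : Fin n → ℝ} {r : ℝ} (hr : 0 < r) :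
    (volume (Metric.closedBall x r))⁻¹ * ∫⁻ y in Metric.closedBall x r, g y ≤ MOpE g x := by
  set T := ∫⁻ y in Metric.closedBall x r, g y with hT
  have key : ∀ r' : ℝ, r < r' → (ENNReal.ofReal ((2*r')^n))⁻¹ * T ≤ MOpE g x := by
    intro r' hr'
    have h1 : T ≤ ∫⁻ y in Metric.ball x r', g y :=
      lintegral_mono_set (Metric.closedBall_subset_ball hr')
    have h2 : (volume (Metric.ball x r'))⁻¹ * ∫⁻ y in Metric.ball x r', g y ≤ MOpE g x :=
      term_le_MOpE g (hr.trans hr') (Metric.mem_ball_self (hr.trans hr'))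
    refine le_trans ?_ h2
    rw [vol_ball x (hr.trans hr')]
    exact mul_le_mul' le_rfl h1
  have hcont : Tendsto (fun r' : ℝ => (ENNReal.ofReal ((2*r')^n))⁻¹ * T) (𝓝[>] r)
      (𝓝 ((ENNReal.ofReal ((2*r)^n))⁻¹ * T)) := by
    apply Filter.Tendsto.mono_left _ nhdsWithin_le_nhds
    apply ENNReal.Tendsto.mul_const
    · apply Filter.Tendsto.inv
      apply ENNReal.tendsto_ofReal
      exact ((continuous_pow n).comp (continuous_const.mul continuous_id)).tendsto r
    · exact Or.inl (ENNReal.inv_ne_zero.2 ENNReal.ofReal_ne_top)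
  have hev : ∀ᶠ r' in 𝓝[>] r, (ENNReal.ofReal ((2*r')^n))⁻¹ * T ≤ MOpE g x :=
    eventually_nhdsWithin_of_forall fun r' hr' => key r' hr'
  have := le_of_tendsto hcont hev
  rwa [vol_cB x hr.le]

lemma ae_tendsto_avg (g : (Fin n → ℝ) → ENNReal) (hg : Measurable g)
    (hloc : ∀ k : ℕ, (∫⁻ y in Metric.ball (0 : Fin n → ℝ) (k+1), g y) ≠ ⊤) :
    ∀ᵐ x ∂(volume : Measure (Fin n → ℝ)),
      Tendsto (fun r : ℝ =>
          (∫⁻ y in Metric.closedBall x r, g y) / volume (Metric.closedBall x r))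
        (𝓝[>] 0) (𝓝 (g x)) := by
  have main : ∀ k : ℕ, ∀ᵐ x ∂(volume : Measure (Fin n → ℝ)),
      x ∈ Metric.ball (0 : Fin n → ℝ) (k+1) →
      Tendsto (fun r : ℝ =>
          (∫⁻ y in Metric.closedBall x r, g y) / volume (Metric.closedBall x r))
        (𝓝[>] 0) (𝓝 (g x)) := by
    intro k
    set gk := (Metric.ball (0 : Fin n → ℝ) (k+1)).indicator g with hgk_def
    have hgk : Measurable gk := hg.indicator Metric.isOpen_ball.measurableSet
    have hfin : (∫⁻ y, gk y ∂(volume : Measure (Fin n → ℝ))) ≠ ⊤ := by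
      rw [hgk_def, lintegral_indicator Metric.isOpen_ball.measurableSet]
      exact hloc k
    have hdiff := VitaliFamily.ae_tendsto_lintegral_div
      (Besicovitch.vitaliFamily (volume : Measure (Fin n → ℝ))) hgk.aemeasurable hfin
    filter_upwards [hdiff] with x hx hxk
    have h2 : Tendsto (fun r : ℝ =>
        (∫⁻ y in Metric.closedBall x r, gk y) / volume (Metric.closedBall x r))
        (𝓝[>] 0) (𝓝 (gk x)) := hx.comp (Besicovitch.tendsto_filterAt volume x)
    have hgkx : gk x = g x := Set.indicator_of_mem hxk g
    rw [hgkx] at h2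
    have hε : (0:ℝ) < (k+1) - dist x 0 := by
      have := Metric.mem_ball.1 hxk
      linarith
    have hev : (fun r : ℝ =>
        (∫⁻ y in Metric.closedBall x r, gk y) / volume (Metric.closedBall x r))
        =ᶠ[𝓝[>] (0:ℝ)] (fun r : ℝ =>
        (∫⁻ y in Metric.closedBall x r, g y) / volume (Metric.closedBall x r)) := by
      have hmem : Ioo (0:ℝ) ((k+1) - dist x 0) ∈ 𝓝[>] (0:ℝ) :=
        Ioo_mem_nhdsGT hε
      filter_upwards [hmem] with r hrm
      congr 1
      apply setLIntegral_congr_fun measurableSet_closedBall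
      intro y hy
      apply Set.indicator_of_mem
      have : dist y 0 ≤ dist y x + dist x 0 := dist_triangle y x 0
      have hyx : dist y x ≤ r := Metric.mem_closedBall.1 hy
      have : dist y 0 < (k+1) := by
        have := hrm.2
        linarith
      exact Metric.mem_ball.2 this
    exact h2.congr' hev
  have hall : ∀ᵐ x ∂(volume : Measure (Fin n → ℝ)), ∀ k : ℕ,
      x ∈ Metric.ball (0 : Fin n → ℝ) (k+1) →
      Tendsto (fun r : ℝ =>
          (∫⁻ y in Metric.closedBall x r, g y) / volume (Metric.closedBall x r))
        (𝓝[>] 0) (𝓝 (g x)) := ae_all_iff.2 main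
  filter_upwards [hall] with x hx
  obtain ⟨k, hk⟩ := exists_nat_gt (dist x 0)
  exact hx k (Metric.mem_ball.2 (by linarith))


/-- If the average of `g` over a closed ball exceeds `lam`, the whole closed ball is inside
the level set `{Mg > lam}`. -/
lemma ball_subset_level (g : (Fin n → ℝ) → ENNReal) {x : Fin n → ℝ} {r : ℝ} {lam : ENNReal}
    (hlamt : lam ≠ ⊤) (hr : 0 < r)
    (hfin : (∫⁻ y in Metric.closedBall x r, g y) ≠ ⊤)
    (h : lam * volume (Metric.closedBall x r) < ∫⁻ y in Metric.closedBall x r, g y) :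
    Metric.closedBall x r ⊆ {z | lam < MOpE g z} := by
  set T := ∫⁻ y in Metric.closedBall x r, g y with hT
  have hvol : volume (Metric.closedBall x r) = ENNReal.ofReal ((2*r)^n) := vol_cB x hr.le
  have hex : ∃ ρ' : ℝ, r < ρ' ∧ lam * ENNReal.ofReal ((2*ρ')^n) < T := by
    rcases eq_or_ne lam 0 with hlam | hlam
    · refine ⟨r + 1, by linarith, ?_⟩
      rw [hlam, zero_mul]
      exact (zero_le).trans_lt h
    · have htarget : ENNReal.ofReal ((2*r)^n) < T / lam := by
        rw [ENNReal.lt_div_iff_mul_lt (Or.inl hlam) (Or.inl hlamt), mul_comm]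
        rw [← hvol]
        exact h
      have hcont : Continuous (fun ρ' : ℝ => ENNReal.ofReal ((2*ρ')^n)) :=
        ENNReal.continuous_ofReal.comp ((continuous_pow n).comp
          (continuous_const.mul continuous_id))
      have hopen : IsOpen {ρ' : ℝ | ENNReal.ofReal ((2*ρ')^n) < T / lam} :=
        isOpen_lt hcont continuous_const
      have hmem : {ρ' : ℝ | ENNReal.ofReal ((2*ρ')^n) < T / lam} ∈ 𝓝 r :=
        hopen.mem_nhds htarget
      have hev : ∀ᶠ ρ' in 𝓝[>] r, ENNReal.ofReal ((2*ρ')^n) < T / lam :=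
        mem_nhdsWithin_of_mem_nhds hmem
      obtain ⟨ρ', hρ'mem, hρ'gt⟩ := (hev.and self_mem_nhdsWithin).exists
      refine ⟨ρ', hρ'gt, ?_⟩
      rw [mul_comm]
      exact (ENNReal.lt_div_iff_mul_lt (Or.inl hlam) (Or.inl hlamt)).1 hρ'mem
  obtain ⟨ρ', hρ'r, hρ'⟩ := hex
  intro y hy
  have hρ'pos : 0 < ρ' := hr.trans hρ'r
  have hyball : y ∈ Metric.ball x ρ' :=
    Metric.mem_ball.2 (lt_of_le_of_lt (Metric.mem_closedBall.1 hy) hρ'r)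
  have hterm : (volume (Metric.ball x ρ'))⁻¹ * ∫⁻ z in Metric.ball x ρ', g z ≤ MOpE g y :=
    term_le_MOpE g hρ'pos hyball
  have hTle : T ≤ ∫⁻ z in Metric.ball x ρ', g z :=
    lintegral_mono_set (Metric.closedBall_subset_ball hρ'r)
  have hvol' : volume (Metric.ball x ρ') = ENNReal.ofReal ((2*ρ')^n) := vol_ball x hρ'pos
  have hv0 : ENNReal.ofReal ((2*ρ')^n) ≠ 0 :=
    (ENNReal.ofReal_pos.2 (pow_pos (by linarith) n)).ne'
  have hvtop : ENNReal.ofReal ((2*ρ')^n) ≠ ⊤ := ENNReal.ofReal_ne_top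
  show lam < MOpE g y
  refine lt_of_lt_of_le ?_ hterm
  rw [hvol']
  have hlt : lam * ENNReal.ofReal ((2*ρ')^n) < ∫⁻ z in Metric.ball x ρ', g z :=
    lt_of_lt_of_le hρ' hTle
  have h2 := (ENNReal.lt_div_iff_mul_lt (Or.inl hv0) (Or.inl hvtop)).2 hlt
  rwa [div_eq_mul_inv, mul_comm] at h2


/-- Weak type (1,1) inequality for the maximal operator. -/
lemma weak11 (hn : 1 ≤ n) {N : ℕ} {τ : ℝ} (hτ : 1 < τ)
    (hN : IsEmpty (Besicovitch.SatelliteConfig (Fin n → ℝ) N τ))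
    (b : (Fin n → ℝ) → ENNReal) (hb : Measurable b) {β : ENNReal}
    (hβ0 : β ≠ 0) (hβt : β ≠ ⊤) (hbt : (∫⁻ y, b y ∂(volume : Measure (Fin n → ℝ))) ≠ ⊤) :
    volume {x | β < MOpE b x}
      ≤ N * (ENNReal.ofReal (2^n) * β⁻¹) * ∫⁻ y, b y ∂(volume : Measure (Fin n → ℝ)) := by
  classical
  set Ib := ∫⁻ y, b y ∂(volume : Measure (Fin n → ℝ)) with hIb
  set W := {x | β < MOpE b x} with hW
  have hsel : ∀ x : Fin n → ℝ, ∃ p : (Fin n → ℝ) × ℝ, x ∈ W →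
      (0 < p.2 ∧ x ∈ Metric.ball p.1 p.2 ∧
        β * volume (Metric.ball p.1 p.2) < ∫⁻ y in Metric.ball p.1 p.2, b y) := by
    intro x
    by_cases hx : x ∈ W
    · have hx' : β < MOpE b x := hx
      simp only [MOpE, lt_iSup_iff] at hx'
      obtain ⟨c, r, hr, hxb, hlt⟩ := hx'
      refine ⟨(c, r), fun _ => ⟨hr, hxb, ?_⟩⟩
      have hv0 : volume (Metric.ball c r) ≠ 0 := (vol_ball_pos c hr).ne'
      have hvt : volume (Metric.ball c r) ≠ ⊤ := (vol_ball_lt_top c hr).ne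
      have := hlt
      rw [mul_comm, ← div_eq_mul_inv] at this
      exact (ENNReal.lt_div_iff_mul_lt (Or.inl hv0) (Or.inl hvt)).1 this
    · exact ⟨(x, 1), fun h => absurd h hx⟩
  choose p hp using hsel
  set rad : (Fin n → ℝ) → ℝ := fun x => 2 * (p x).2 with hrad
  have hVm : β⁻¹ * Ib ≠ ⊤ := ENNReal.mul_ne_top (ENNReal.inv_ne_top.2 hβ0) hbt
  set Rb : ℝ := max 1 ((β⁻¹ * Ib).toReal + 1) with hRb
  have hball_bound : ∀ x ∈ W, volume (Metric.ball (p x).1 (p x).2) < β⁻¹ * Ib := by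
    intro x hx
    obtain ⟨hr, -, hlt⟩ := hp x hx
    have h1 : β * volume (Metric.ball (p x).1 (p x).2) < Ib :=
      hlt.trans_le (setLIntegral_le_lintegral _ _)
    rw [← ENNReal.div_eq_inv_mul]
    exact (ENNReal.lt_div_iff_mul_lt (Or.inl hβ0) (Or.inl hβt)).2 (by rwa [mul_comm] at h1)
  have hrad_le : ∀ x ∈ W, 0 < rad x ∧ rad x ≤ Rb := by
    intro x hx
    obtain ⟨hr, _, _⟩ := hp x hx
    refine ⟨by simp only [hrad]; linarith, ?_⟩
    have hlt := hball_bound x hx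
    rw [vol_ball _ hr] at hlt
    have h2 : (2 * (p x).2)^n < (β⁻¹ * Ib).toReal + 1 := by
      have h3 : ENNReal.ofReal ((2 * (p x).2)^n) < ENNReal.ofReal ((β⁻¹ * Ib).toReal + 1) := by
        refine hlt.trans_le ?_
        conv_lhs => rw [← ENNReal.ofReal_toReal hVm]
        exact ENNReal.ofReal_le_ofReal (by linarith)
      have h4 := (ENNReal.ofReal_lt_ofReal_iff (by positivity)).1 h3
      calc (2 * (p x).2)^n ≤ max ((2 * (p x).2)^n) 0 := le_max_left _ _
        _ = (2 * (p x).2)^n := max_eq_left (by positivity)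
        _ < _ := h4
    by_cases hcase : rad x ≤ 1
    · exact hcase.trans (le_max_left _ _)
    · push_neg at hcase
      have : rad x ≤ (rad x)^n := le_self_pow₀ hcase.le (by omega)
      refine le_trans ?_ (le_max_right 1 _)
      simp only [hrad] at this ⊢
      linarith [h2, this]
  have hK : ∀ x ∈ W, volume (Metric.closedBall x (rad x))
      ≤ (ENNReal.ofReal (2^n) * β⁻¹) *
        (volume.withDensity b) (Metric.closedBall x (rad x)) := by
    intro x hx
    obtain ⟨hr, hxb, hlt⟩ := hp x hx
    have hradpos : 0 < rad x := by simp only [hrad]; linarith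
    have hsub : Metric.ball (p x).1 (p x).2 ⊆ Metric.closedBall x (rad x) := by
      intro y hy
      have h1 : dist y x ≤ dist y (p x).1 + dist (p x).1 x := dist_triangle _ _ _
      have h2 : dist y (p x).1 < (p x).2 := Metric.mem_ball.1 hy
      have h3 : dist (p x).1 x < (p x).2 := Metric.mem_ball'.1 hxb
      exact Metric.mem_closedBall.2 (by simp only [hrad]; linarith)
    have hvol_eq : volume (Metric.closedBall x (rad x))
        = ENNReal.ofReal (2^n) * volume (Metric.ball (p x).1 (p x).2) := by
      rw [vol_cB x hradpos.le, vol_ball _ hr, ← ENNReal.ofReal_mul (by positivity)]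
      congr 1
      simp only [hrad]
      rw [← mul_pow]
    rw [hvol_eq, withDensity_apply b measurableSet_closedBall]
    have hvle : volume (Metric.ball (p x).1 (p x).2)
        ≤ β⁻¹ * ∫⁻ y in Metric.closedBall x (rad x), b y := by
      have h5 : β * volume (Metric.ball (p x).1 (p x).2)
          ≤ ∫⁻ y in Metric.closedBall x (rad x), b y :=
        hlt.le.trans (lintegral_mono_set hsub)
      rw [← ENNReal.div_eq_inv_mul]
      exact (ENNReal.le_div_iff_mul_le (Or.inl hβ0) (Or.inl hβt)).2 (by rwa [mul_comm])
    calc ENNReal.ofReal (2^n) * volume (Metric.ball (p x).1 (p x).2)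
        ≤ ENNReal.ofReal (2^n) * (β⁻¹ * ∫⁻ y in Metric.closedBall x (rad x), b y) :=
          mul_le_mul' le_rfl hvle
      _ = (ENNReal.ofReal (2^n) * β⁻¹) * ∫⁻ y in Metric.closedBall x (rad x), b y := by
          rw [mul_assoc]
  have := besicovitch_le hτ hN volume (volume.withDensity b)
    (ENNReal.ofReal (2^n) * β⁻¹) W Set.univ rad Rb hrad_le
    (fun x _ => Set.subset_univ _) hK
  refine this.trans ?_
  have h6 : (volume.withDensity b) Set.univ = Ib := by
    rw [withDensity_apply b MeasurableSet.univ, Measure.restrict_univ]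
  rw [h6]


/-- Excess identity: the "excess mass" of `g` over `lam0 = g*(t)` equals the excess mass of the
rearrangement over `(0, t]`. -/
lemma excess_identity (g : (Fin n → ℝ) → ENNReal) (hg : Measurable g) {t : ℝ} (ht : 0 < t)
    (hlam0t : rearrE volume g t ≠ ⊤) :
    ∫⁻ x, (g x - rearrE volume g t) ∂(volume : Measure (Fin n → ℝ))
      = ∫⁻ s in Ioc (0:ℝ) t, (rearrE volume g s - rearrE volume g t) := by
  set lam0 := rearrE volume g t with hlam0
  have hcanc : AddLECancellable lam0 := ENNReal.cancel_of_ne hlam0t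
  have hρanti : Antitone (fun s => rearrE volume g s) := rearrE_anti volume g
  have hρmeas : Measurable (fun s => rearrE volume g s - lam0) :=
    Antitone.measurable (fun a b hab => tsub_le_tsub_right (hρanti hab) lam0)
  have hLHS := layercake (volume : Measure (Fin n → ℝ)) (h := fun x => g x - lam0)
    (hg.sub measurable_const)
  have hRHS := layercake (volume.restrict (Ioc (0:ℝ) t)) (h := fun s => rearrE volume g s - lam0)
    hρmeas
  rw [hLHS, hRHS]
  apply setLIntegral_congr_fun measurableSet_Ioi
  intro β hβ
  beta_reduce
  have hβ0 : (0:ℝ) < β := hβ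
  have hofβ : ENNReal.ofReal β ≠ 0 := (ENNReal.ofReal_pos.2 hβ0).ne'
  -- left side set
  have hls : {x | ENNReal.ofReal β < g x - lam0} = {x | lam0 + ENNReal.ofReal β < g x} := by
    ext x
    simp only [Set.mem_setOf_eq]
    exact hcanc.lt_tsub_iff_left
  -- right side set
  have hrs : {s : ℝ | ENNReal.ofReal β < rearrE volume g s - lam0} ∩ Ioc (0:ℝ) t
      = {s : ℝ | 0 < s ∧ lam0 + ENNReal.ofReal β < rearrE volume g s} := by
    ext s
    simp only [Set.mem_inter_iff, Set.mem_setOf_eq, Set.mem_Ioc]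
    constructor
    · rintro ⟨h1, h2, _⟩
      exact ⟨h2, hcanc.lt_tsub_iff_left.1 h1⟩
    · rintro ⟨h1, h2⟩
      refine ⟨hcanc.lt_tsub_iff_left.2 h2, h1, ?_⟩
      by_contra hst
      push_neg at hst
      have : rearrE volume g s ≤ lam0 := hρanti hst.le
      have hlt : lam0 < lam0 + ENNReal.ofReal β :=
        ENNReal.lt_add_right hlam0t hofβ
      exact absurd (hlt.trans h2) (not_lt.2 this)
  rw [hls]
  have : (volume.restrict (Ioc (0:ℝ) t)) {s : ℝ | ENNReal.ofReal β < rearrE volume g s - lam0}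
      = volume ({s : ℝ | ENNReal.ofReal β < rearrE volume g s - lam0} ∩ Ioc (0:ℝ) t) := by
    rw [Measure.restrict_apply]
    exact measurableSet_lt measurable_const hρmeas
  rw [this, hrs, equimeasurable]


/-- Reverse weak type inequality (Herz's construction). -/
lemma reverse_weak (hn : 1 ≤ n) {N : ℕ} {τ : ℝ} (hτ : 1 < τ)
    (hN : IsEmpty (Besicovitch.SatelliteConfig (Fin n → ℝ) N τ))
    (g : (Fin n → ℝ) → ENNReal) (hg : Measurable g)
    (hloc : ∀ (x : Fin n → ℝ) (R : ℝ), (∫⁻ y in Metric.closedBall x R, g y) ≠ ⊤)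
    {lam : ENNReal} (hlam0 : lam ≠ 0) (hlamt : lam ≠ ⊤) {t : ℝ} (ht : 0 < t)
    (hE : volume {x | lam < MOpE g x} ≤ ENNReal.ofReal t) :
    ∫⁻ x in {x | lam < g x}, g x
      ≤ N * (ENNReal.ofReal (4^n) * lam) * ENNReal.ofReal t := by
  classical
  set E := {x | lam < MOpE g x} with hEdef
  have hdiff := ae_tendsto_avg g hg (fun k =>
    ((lintegral_mono_set Metric.ball_subset_closedBall).trans_lt
      (lt_top_iff_ne_top.2 (hloc 0 (k+1)))).ne)
  set Z := toMeasurable volume {x | ¬ Tendsto (fun r : ℝ =>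
      (∫⁻ y in Metric.closedBall x r, g y) / volume (Metric.closedBall x r))
      (𝓝[>] 0) (𝓝 (g x))} with hZdef
  have hZ0 : volume Z = 0 := by
    rw [measure_toMeasurable]
    exact ae_iff.1 hdiff
  set A := {x | lam < g x} \ Z with hAdef
  have hsel : ∀ x : Fin n → ℝ, ∃ r : ℝ, x ∈ A →
      (0 < r ∧ r ≤ max 1 t ∧ Metric.closedBall x r ⊆ E ∧
       (∫⁻ y in Metric.closedBall x r, g y)
          ≤ (ENNReal.ofReal (4^n) * lam) * volume (Metric.closedBall x r)) := by
    intro x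
    by_cases hx : x ∈ A
    swap
    · exact ⟨1, fun h => absurd h hx⟩
    have hgx : lam < g x := hx.1
    have hxZ : x ∉ Z := hx.2
    have htend : Tendsto (fun r : ℝ =>
        (∫⁻ y in Metric.closedBall x r, g y) / volume (Metric.closedBall x r))
        (𝓝[>] 0) (𝓝 (g x)) := by
      by_contra hcon
      exact hxZ (subset_toMeasurable _ _ hcon)
    set S := {r : ℝ | 0 < r ∧
        lam * volume (Metric.closedBall x r) < ∫⁻ y in Metric.closedBall x r, g y} with hSdef
    have hS_sub : ∀ r ∈ S, Metric.closedBall x r ⊆ E := fun r hr =>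
      ball_subset_level g hlamt hr.1 (hloc x r) hr.2
    have hS_bdd : ∀ r ∈ S, r ≤ max 1 t := by
      intro r hrS
      have h1 : volume (Metric.closedBall x r) ≤ ENNReal.ofReal t :=
        le_trans (measure_mono (hS_sub r hrS)) hE
      rw [vol_cB x hrS.1.le] at h1
      have h2 : (2*r)^n ≤ t := (ENNReal.ofReal_le_ofReal_iff ht.le).1 h1
      by_cases hr1 : 2*r ≤ 1
      · have : r ≤ 1 := by linarith [hrS.1]
        exact this.trans (le_max_left _ _)
      · push_neg at hr1
        have h3 : 2*r ≤ (2*r)^n := le_self_pow₀ hr1.le (by omega)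
        have : r ≤ t := by linarith [hrS.1]
        exact this.trans (le_max_right _ _)
    have hS_ne : S.Nonempty := by
      have hev : ∀ᶠ r in 𝓝[>] (0:ℝ), lam <
          (∫⁻ y in Metric.closedBall x r, g y) / volume (Metric.closedBall x r) :=
        htend (isOpen_Ioi.mem_nhds hgx)
      obtain ⟨r, hrlt, hrpos⟩ := (hev.and eventually_mem_nhdsWithin).exists
      have hrpos' : (0:ℝ) < r := hrpos
      have hv0 : volume (Metric.closedBall x r) ≠ 0 := by
        rw [vol_cB x hrpos'.le]
        exact (ENNReal.ofReal_pos.2 (pow_pos (by linarith) n)).ne'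
      have hvt : volume (Metric.closedBall x r) ≠ ⊤ := by
        rw [vol_cB x hrpos'.le]; exact ENNReal.ofReal_ne_top
      exact ⟨r, hrpos', (ENNReal.lt_div_iff_mul_lt (Or.inl hv0) (Or.inl hvt)).1 hrlt⟩
    set rx := sSup S with hrx
    have hbddabove : BddAbove S := ⟨max 1 t, fun r hr => hS_bdd r hr⟩
    obtain ⟨r0, hr0S⟩ := hS_ne
    have hrx_pos : 0 < rx := lt_of_lt_of_le hr0S.1 (le_csSup hbddabove hr0S)
    obtain ⟨r', hr'S, hr'big⟩ := exists_lt_of_lt_csSup ⟨r0, hr0S⟩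
      (by linarith : rx/2 < rx)
    have hr'le : r' ≤ rx := le_csSup hbddabove hr'S
    refine ⟨r', fun _ => ⟨hr'S.1, hS_bdd r' hr'S, hS_sub r' hr'S, ?_⟩⟩
    have h2rx_pos : 0 < 2*rx := by linarith
    have h2rx : (2*rx) ∉ S := fun hmem => by
      have := le_csSup hbddabove hmem
      linarith
    have hout : ∫⁻ y in Metric.closedBall x (2*rx), g y
        ≤ lam * volume (Metric.closedBall x (2*rx)) := by
      by_contra hcon
      push_neg at hcon
      exact h2rx ⟨h2rx_pos, hcon⟩
    calc ∫⁻ y in Metric.closedBall x r', g y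
        ≤ ∫⁻ y in Metric.closedBall x (2*rx), g y :=
          lintegral_mono_set (Metric.closedBall_subset_closedBall (by linarith))
      _ ≤ lam * volume (Metric.closedBall x (2*rx)) := hout
      _ = lam * ENNReal.ofReal ((2*(2*rx))^n) := by rw [vol_cB x h2rx_pos.le]
      _ ≤ lam * ENNReal.ofReal ((4*(2*r'))^n) := by
          refine mul_le_mul' le_rfl (ENNReal.ofReal_le_ofReal ?_)
          apply pow_le_pow_left₀ (by linarith)
          linarith
      _ = (ENNReal.ofReal (4^n) * lam) * ENNReal.ofReal ((2*r')^n) := by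
          rw [mul_pow, ENNReal.ofReal_mul (by positivity)]
          ring
      _ = (ENNReal.ofReal (4^n) * lam) * volume (Metric.closedBall x r') := by
          rw [vol_cB x hr'S.1.le]
  choose rad hrad using hsel
  have hbes := besicovitch_le hτ hN (volume.withDensity g) volume
      (ENNReal.ofReal (4^n) * lam) A E rad (max 1 t)
      (fun x hx => ⟨(hrad x hx).1, (hrad x hx).2.1⟩)
      (fun x hx => (hrad x hx).2.2.1)
      (fun x hx => by
        rw [withDensity_apply g measurableSet_closedBall]
        exact (hrad x hx).2.2.2)
  have hsplit : ∫⁻ x in {x | lam < g x}, g x ≤ (volume.withDensity g) A := by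
    have h1 : ∫⁻ x in {x | lam < g x}, g x = (volume.withDensity g) {x | lam < g x} :=
      (withDensity_apply g (measurableSet_lt measurable_const hg)).symm
    rw [h1]
    have h2 : {x | lam < g x} ⊆ A ∪ Z := by
      intro x hx
      by_cases hz : x ∈ Z
      · exact Or.inr hz
      · exact Or.inl ⟨hx, hz⟩
    calc (volume.withDensity g) {x | lam < g x}
        ≤ (volume.withDensity g) (A ∪ Z) := measure_mono h2
      _ ≤ (volume.withDensity g) A + (volume.withDensity g) Z := measure_union_le _ _
      _ = (volume.withDensity g) A := by
          have hz : (volume.withDensity g) Z = 0 := by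
            rw [withDensity_apply g (measurableSet_toMeasurable _ _)]
            exact setLIntegral_measure_zero _ _ hZ0
          rw [hz, add_zero]
  exact hsplit.trans (hbes.trans (mul_le_mul' le_rfl hE))


lemma MOpE_zero : MOpE (fun _ => (0:ENNReal)) = fun _ : Fin n → ℝ => (0:ENNReal) := by
  funext x
  refine le_antisymm ?_ (zero_le)
  refine iSup_le fun c => iSup_le fun r => iSup_le fun _ => iSup_le fun _ => ?_
  simp [lintegral_zero]

lemma MOpE_pos_everywhere (g : (Fin n → ℝ) → ENNReal) {k : ℝ} (hk : 0 < k)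
    (hpos : (∫⁻ y in Metric.ball (0 : Fin n → ℝ) k, g y) ≠ 0) (y : Fin n → ℝ) :
    0 < MOpE g y := by
  set R := max k (dist y 0 + 1) with hR
  have hRpos : 0 < R := lt_of_lt_of_le hk (le_max_left _ _)
  have hy : y ∈ Metric.ball (0 : Fin n → ℝ) R := by
    rw [Metric.mem_ball]
    calc dist y 0 < dist y 0 + 1 := by linarith
      _ ≤ R := le_max_right _ _
  have hterm := term_le_MOpE g hRpos hy
  refine lt_of_lt_of_le ?_ hterm
  apply ENNReal.mul_pos
  · exact ENNReal.inv_ne_zero.2 (vol_ball_lt_top (0 : Fin n → ℝ) hRpos).ne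
  · intro h0
    apply hpos
    refine le_antisymm ?_ (zero_le)
    rw [← h0]
    exact lintegral_mono_set (Metric.ball_subset_ball (le_max_left _ _))

lemma volume_univ_top (hn : 1 ≤ n) : (volume : Measure (Fin n → ℝ)) Set.univ = ⊤ := by
  by_contra h
  set M := ((volume : Measure (Fin n → ℝ)) Set.univ).toReal + 1 with hM
  set r := max 1 M with hr
  have hrpos : (0:ℝ) < r := lt_of_lt_of_le one_pos (le_max_left _ _)
  have h1 : ENNReal.ofReal M ≤ (volume : Measure (Fin n → ℝ)) Set.univ := by
    have h2 : M ≤ (2*r)^n := by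
      have h3 : (1:ℝ) ≤ 2*r := by
        have := le_max_left 1 M
        linarith
      have h4 : 2*r ≤ (2*r)^n := le_self_pow₀ h3 (by omega)
      have h5 : M ≤ r := le_max_right _ _
      linarith
    calc ENNReal.ofReal M ≤ ENNReal.ofReal ((2*r)^n) := ENNReal.ofReal_le_ofReal h2
      _ = volume (Metric.ball (0 : Fin n → ℝ) r) := (vol_ball _ hrpos).symm
      _ ≤ (volume : Measure (Fin n → ℝ)) Set.univ := measure_mono (Set.subset_univ _)
  have h6 : (volume : Measure (Fin n → ℝ)) Set.univ
      = ENNReal.ofReal (((volume : Measure (Fin n → ℝ)) Set.univ).toReal) :=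
    (ENNReal.ofReal_toReal h).symm
  rw [h6] at h1
  have h7 := (ENNReal.ofReal_le_ofReal_iff ENNReal.toReal_nonneg).1 h1
  simp only [hM] at h7
  linarith

lemma ae_le_MOpE (g : (Fin n → ℝ) → ENNReal) (hg : Measurable g)
    (hloc : ∀ (x : Fin n → ℝ) (R : ℝ), (∫⁻ y in Metric.closedBall x R, g y) ≠ ⊤) :
    ∀ᵐ x ∂(volume : Measure (Fin n → ℝ)), g x ≤ MOpE g x := by
  filter_upwards [ae_tendsto_avg g hg (fun k =>
    ((lintegral_mono_set Metric.ball_subset_closedBall).trans_lt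
      (lt_top_iff_ne_top.2 (hloc 0 (k+1)))).ne)] with x hx
  refine le_of_tendsto hx (eventually_nhdsWithin_of_forall fun r hr => ?_)
  have h2 := cB_avg_le_MOpE g (x := x) (r := r) hr
  rw [div_eq_mul_inv, mul_comm]
  exact h2


lemma main_lower (hn : 1 ≤ n) {N : ℕ} {τ : ℝ} (hτ : 1 < τ)
    (hN : IsEmpty (Besicovitch.SatelliteConfig (Fin n → ℝ) N τ))
    (g : (Fin n → ℝ) → ENNReal) (hg : Measurable g)
    (hloc : ∀ (x : Fin n → ℝ) (R : ℝ), (∫⁻ y in Metric.closedBall x R, g y) ≠ ⊤)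
    {t : ℝ} (ht : 0 < t) :
    ∫⁻ s in Ioc (0:ℝ) t, rearrE volume g s
      ≤ ENNReal.ofReal (2 + (N:ℝ) * 4^n) *
        (rearrE volume (MOpE g) t * ENNReal.ofReal t) := by
  set lam := rearrE volume (MOpE g) t with hlamdef
  set lam0 := rearrE volume g t with hlam0def
  have hot0 : ENNReal.ofReal t ≠ 0 := (ENNReal.ofReal_pos.2 ht).ne'
  have hott : ENNReal.ofReal t ≠ ⊤ := ENNReal.ofReal_ne_top
  have hE : volume {x | lam < MOpE g x} ≤ ENNReal.ofReal t :=
    distr_rearrE_le volume (MOpE g) t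
  have hofKl : ENNReal.ofReal (2 + (N:ℝ) * 4^n)
      = 2 + (N:ENNReal) * ENNReal.ofReal (4^n) := by
    rw [ENNReal.ofReal_add (by norm_num) (by positivity),
      ENNReal.ofReal_mul (Nat.cast_nonneg N), ENNReal.ofReal_natCast,
      ENNReal.ofReal_ofNat]
  rcases eq_or_ne lam ⊤ with hlamt | hlamt
  · have htop : ENNReal.ofReal (2 + (N:ℝ) * 4^n) * (lam * ENNReal.ofReal t) = ⊤ := by
      rw [hlamt, ENNReal.top_mul hot0, ENNReal.mul_top]
      exact (ENNReal.ofReal_pos.2 (by positivity)).ne'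
    rw [htop]
    exact le_top
  rcases eq_or_ne lam 0 with hlam0' | hlam0'
  · have hzero : volume {x | 0 < g x} = 0 := by
      by_contra hzero
      have hex : ∃ k : ℕ, volume ({x | 0 < g x} ∩ Metric.ball 0 (k+1)) ≠ 0 := by
        by_contra hall
        push_neg at hall
        apply hzero
        have hcover : {x | 0 < g x} ⊆ ⋃ k : ℕ, ({x | 0 < g x} ∩ Metric.ball 0 (k+1)) := by
          intro x hx
          obtain ⟨k, hk⟩ := exists_nat_gt (dist x 0)
          exact Set.mem_iUnion.2 ⟨k, hx, Metric.mem_ball.2 (by push_cast; linarith)⟩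
        refine le_antisymm ?_ (zero_le)
        calc volume {x | 0 < g x} ≤ volume (⋃ k : ℕ, ({x | 0 < g x} ∩ Metric.ball 0 (k+1))) :=
              measure_mono hcover
          _ = 0 := measure_iUnion_null hall
      obtain ⟨k, hk⟩ := hex
      have hTb : (∫⁻ y in Metric.ball (0 : Fin n → ℝ) ((k:ℝ)+1), g y) ≠ 0 := by
        intro h0
        apply hk
        have hb : MeasurableSet (Metric.ball (0 : Fin n → ℝ) ((k:ℝ)+1)) :=
          Metric.isOpen_ball.measurableSet
        have hae := (setLIntegral_eq_zero_iff hb hg).1 h0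
        have h1 : volume {x | ¬ (x ∈ Metric.ball (0 : Fin n → ℝ) ((k:ℝ)+1) → g x = 0)} = 0 :=
          ae_iff.1 hae
        have hsub9 : ({x | 0 < g x} ∩ Metric.ball (0:Fin n → ℝ) ((k:ℝ)+1))
            ⊆ {x | ¬ (x ∈ Metric.ball (0 : Fin n → ℝ) ((k:ℝ)+1) → g x = 0)} := by
          rintro x ⟨hx1, hx2⟩ hcon
          exact (pos_iff_ne_zero.1 hx1) (hcon hx2)
        exact measure_mono_null hsub9 h1
      have hMpos : ∀ y, 0 < MOpE g y := MOpE_pos_everywhere g (by positivity) hTb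
      have huniv : {x | lam < MOpE g x} = Set.univ := by
        rw [hlam0']
        ext x
        simp [hMpos x]
      rw [huniv, volume_univ_top hn] at hE
      exact absurd (hE.trans_lt ENNReal.ofReal_lt_top) (lt_irrefl ⊤)
    have hI0 : ∫⁻ s in Ioc (0:ℝ) t, rearrE volume g s = 0 := by
      have hs0 : ∀ s ∈ Ioc (0:ℝ) t, rearrE volume g s = (fun _ : ℝ => (0:ENNReal)) s := by
        intro s hs
        refine le_antisymm ?_ (zero_le)
        apply sInf_le
        show volume {x | 0 < g x} ≤ ENNReal.ofReal s
        rw [hzero]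
        exact zero_le
      rw [setLIntegral_congr_fun measurableSet_Ioc hs0, lintegral_zero]
    rw [hI0]
    exact zero_le
  · -- main case : 0 < lam < ⊤
    have hlam0_le : lam0 ≤ lam := by
      apply sInf_le
      show volume {x | lam < g x} ≤ ENNReal.ofReal t
      refine le_trans (measure_mono_ae ?_) hE
      filter_upwards [ae_le_MOpE g hg hloc] with x hx hmem
      exact lt_of_lt_of_le hmem hx
    have hlam0t : lam0 ≠ ⊤ := fun h => hlamt (top_le_iff.1 (h ▸ hlam0_le))
    have hRW := reverse_weak hn hτ hN g hg hloc hlam0' hlamt ht hE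
    have hexc := excess_identity g hg ht hlam0t
    have hdist0 : volume {x | lam0 < g x} ≤ ENNReal.ofReal t := distr_rearrE_le volume g t
    have hms1 : MeasurableSet {y | lam0 < g y} := measurableSet_lt measurable_const hg
    have hms2 : MeasurableSet {y | lam < g y} := measurableSet_lt measurable_const hg
    have hmeas_ind1 : Measurable ({y | lam0 < g y}.indicator (fun _ => (1:ENNReal))) :=
      measurable_const.indicator hms1
    have hpt : ∀ x, g x - lam0 ≤ lam * ({y | lam0 < g y}.indicator (fun _ => (1:ENNReal)) x)
        + ({y | lam < g y}.indicator g x) := by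
      intro x
      rcases le_or_gt (g x) lam0 with h1 | h1
      · rw [tsub_eq_zero_iff_le.2 h1]
        exact zero_le
      rcases le_or_gt (g x) lam with h2 | h2
      · have hind : {y | lam0 < g y}.indicator (fun _ => (1:ENNReal)) x = 1 := by
          have hmem : x ∈ {y | lam0 < g y} := h1
          exact Set.indicator_of_mem hmem _
        calc g x - lam0 ≤ g x := tsub_le_self
          _ ≤ lam := h2
          _ = lam * ({y | lam0 < g y}.indicator (fun _ => (1:ENNReal)) x) := by
              rw [hind, mul_one]
          _ ≤ _ := le_self_add
      · have hind : {y | lam < g y}.indicator g x = g x := by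
          have hmem : x ∈ {y | lam < g y} := h2
          exact Set.indicator_of_mem hmem g
        calc g x - lam0 ≤ g x := tsub_le_self
          _ = {y | lam < g y}.indicator g x := hind.symm
          _ ≤ _ := le_add_self
    have hint : ∫⁻ x, (g x - lam0) ∂(volume : Measure (Fin n → ℝ))
        ≤ lam * volume {y | lam0 < g y} + ∫⁻ x in {y | lam < g y}, g x := by
      calc ∫⁻ x, (g x - lam0) ∂(volume : Measure (Fin n → ℝ))
          ≤ ∫⁻ x, (lam * ({y | lam0 < g y}.indicator (fun _ => (1:ENNReal)) x)
            + ({y | lam < g y}.indicator g x)) ∂(volume : Measure (Fin n → ℝ)) :=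
            lintegral_mono hpt
        _ = ∫⁻ x, lam * ({y | lam0 < g y}.indicator (fun _ => (1:ENNReal)) x)
              ∂(volume : Measure (Fin n → ℝ))
            + ∫⁻ x, ({y | lam < g y}.indicator g x) ∂(volume : Measure (Fin n → ℝ)) :=
            lintegral_add_left (hmeas_ind1.const_mul lam) _
        _ = lam * volume {y | lam0 < g y} + ∫⁻ x in {y | lam < g y}, g x := by
            rw [lintegral_const_mul lam hmeas_ind1, lintegral_indicator hms1,
              setLIntegral_one, lintegral_indicator hms2]
    calc ∫⁻ s in Ioc (0:ℝ) t, rearrE volume g s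
        ≤ ∫⁻ s in Ioc (0:ℝ) t, (lam0 + (rearrE volume g s - lam0)) :=
          lintegral_mono fun s => le_add_tsub
      _ = lam0 * ENNReal.ofReal t + ∫⁻ s in Ioc (0:ℝ) t, (rearrE volume g s - lam0) := by
          rw [lintegral_add_left measurable_const, setLIntegral_const, Real.volume_Ioc,
            sub_zero]
      _ = lam0 * ENNReal.ofReal t + ∫⁻ x, (g x - lam0) ∂(volume : Measure (Fin n → ℝ)) := by
          rw [hexc]
      _ ≤ lam0 * ENNReal.ofReal t
          + (lam * volume {y | lam0 < g y} + ∫⁻ x in {y | lam < g y}, g x) :=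
          add_le_add le_rfl hint
      _ ≤ lam * ENNReal.ofReal t + (lam * ENNReal.ofReal t
          + (N:ENNReal) * (ENNReal.ofReal (4^n) * lam) * ENNReal.ofReal t) :=
          add_le_add (mul_le_mul' hlam0_le le_rfl)
            (add_le_add (mul_le_mul' le_rfl hdist0) hRW)
      _ = ENNReal.ofReal (2 + (N:ℝ) * 4^n) * (lam * ENNReal.ofReal t) := by
          rw [hofKl]
          ring


lemma main_upper (hn : 1 ≤ n) {N : ℕ} {τ : ℝ} (hτ : 1 < τ)
    (hN : IsEmpty (Besicovitch.SatelliteConfig (Fin n → ℝ) N τ))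
    (g : (Fin n → ℝ) → ENNReal) (hg : Measurable g) {t : ℝ} (ht : 0 < t)
    (hIne0 : (∫⁻ s in Ioc (0:ℝ) t, rearrE volume g s) ≠ 0)
    (hItop : (∫⁻ s in Ioc (0:ℝ) t, rearrE volume g s) ≠ ⊤) :
    rearrE volume (MOpE g) t
      ≤ ENNReal.ofReal (1 + 2*((N:ℝ)*2^n + 1)) *
        ((ENNReal.ofReal t)⁻¹ * ∫⁻ s in Ioc (0:ℝ) t, rearrE volume g s) := by
  set I := ∫⁻ s in Ioc (0:ℝ) t, rearrE volume g s with hIdef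
  set lam0 := rearrE volume g t with hlam0def
  have hot0 : ENNReal.ofReal t ≠ 0 := (ENNReal.ofReal_pos.2 ht).ne'
  have hott : ENNReal.ofReal t ≠ ⊤ := ENNReal.ofReal_ne_top
  have hIt : lam0 * ENNReal.ofReal t ≤ I := by
    have h1 : ∫⁻ s in Ioc (0:ℝ) t, lam0 ≤ I := by
      apply setLIntegral_mono' measurableSet_Ioc
      intro s hs
      exact rearrE_anti volume g hs.2
    calc lam0 * ENNReal.ofReal t = ∫⁻ s in Ioc (0:ℝ) t, lam0 := by
          rw [setLIntegral_const, Real.volume_Ioc, sub_zero]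
      _ ≤ I := h1
  have hlam0t : lam0 ≠ ⊤ := by
    intro h
    apply hItop
    rw [h, ENNReal.top_mul hot0] at hIt
    exact top_le_iff.1 hIt
  set J := I * (ENNReal.ofReal t)⁻¹ with hJdef
  have hJ0 : J ≠ 0 := mul_ne_zero hIne0 (ENNReal.inv_ne_zero.2 hott)
  have hJt : J ≠ ⊤ := ENNReal.mul_ne_top hItop (ENNReal.inv_ne_top.2 hot0)
  have hlam0J : lam0 ≤ J := by
    rw [hJdef, ← div_eq_mul_inv]
    exact (ENNReal.le_div_iff_mul_le (Or.inl hot0) (Or.inl hott)).2 hIt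
  set b := fun x => g x - lam0 with hbdef
  have hbmeas : Measurable b := hg.sub measurable_const
  have hbI : (∫⁻ x, b x ∂(volume : Measure (Fin n → ℝ))) ≤ I := by
    have hexc := excess_identity g hg ht hlam0t
    calc (∫⁻ x, b x ∂(volume : Measure (Fin n → ℝ)))
        = ∫⁻ s in Ioc (0:ℝ) t, (rearrE volume g s - lam0) := hexc
      _ ≤ I := lintegral_mono fun s => tsub_le_self
  have hbtop : (∫⁻ x, b x ∂(volume : Measure (Fin n → ℝ))) ≠ ⊤ :=
    (hbI.trans_lt (lt_top_iff_ne_top.2 hItop)).ne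
  set K1 : ℝ := (N:ℝ)*2^n + 1 with hK1
  have hK1pos : 0 < K1 := by positivity
  set β := ENNReal.ofReal (2*K1) * J with hβdef
  have hc0 : ENNReal.ofReal (2*K1) ≠ 0 := (ENNReal.ofReal_pos.2 (by positivity)).ne'
  have hct : ENNReal.ofReal (2*K1) ≠ ⊤ := ENNReal.ofReal_ne_top
  have hβ0 : β ≠ 0 := mul_ne_zero hc0 hJ0
  have hβt : β ≠ ⊤ := ENNReal.mul_ne_top hct hJt
  have hweak := weak11 hn hτ hN b hbmeas hβ0 hβt hbtop
  have he1 : (N:ENNReal) * ENNReal.ofReal (2^n) ≤ ENNReal.ofReal K1 := by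
    rw [← ENNReal.ofReal_natCast N, ← ENNReal.ofReal_mul (Nat.cast_nonneg N)]
    exact ENNReal.ofReal_le_ofReal (by linarith)
  have hJinvI : J⁻¹ * I = ENNReal.ofReal t := by
    rw [hJdef, ENNReal.mul_inv (Or.inl hIne0) (Or.inl hItop), inv_inv]
    calc I⁻¹ * ENNReal.ofReal t * I = ENNReal.ofReal t * (I⁻¹ * I) := by ring
      _ = ENNReal.ofReal t := by rw [ENNReal.inv_mul_cancel hIne0 hItop, mul_one]
  have hwt : volume {x | β < MOpE b x} ≤ ENNReal.ofReal t := by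
    refine hweak.trans ?_
    calc (N:ENNReal) * (ENNReal.ofReal (2^n) * β⁻¹) * (∫⁻ x, b x ∂(volume : Measure (Fin n → ℝ)))
        = ((N:ENNReal) * ENNReal.ofReal (2^n)) * β⁻¹
            * (∫⁻ x, b x ∂(volume : Measure (Fin n → ℝ))) := by ring
      _ ≤ ENNReal.ofReal K1 * β⁻¹ * I := mul_le_mul' (mul_le_mul' he1 le_rfl) hbI
      _ = ENNReal.ofReal K1 * ((ENNReal.ofReal (2*K1))⁻¹ * J⁻¹) * I := by
          rw [hβdef, ENNReal.mul_inv (Or.inl hc0) (Or.inl hct)]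
      _ = (ENNReal.ofReal K1 * (ENNReal.ofReal (2*K1))⁻¹) * (J⁻¹ * I) := by ring
      _ ≤ 1 * (J⁻¹ * I) := by
          refine mul_le_mul' ?_ le_rfl
          have h2 : ENNReal.ofReal K1 ≤ ENNReal.ofReal (2*K1) :=
            ENNReal.ofReal_le_ofReal (by linarith)
          calc ENNReal.ofReal K1 * (ENNReal.ofReal (2*K1))⁻¹
              ≤ ENNReal.ofReal (2*K1) * (ENNReal.ofReal (2*K1))⁻¹ := mul_le_mul' h2 le_rfl
            _ = 1 := ENNReal.mul_inv_cancel hc0 hct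
      _ = ENNReal.ofReal t := by rw [one_mul, hJinvI]
  have hsubadd : ∀ x, MOpE g x ≤ lam0 + MOpE b x :=
    MOpE_le_const_add g b lam0 (fun x => le_add_tsub)
  have hsubset : {x | lam0 + β < MOpE g x} ⊆ {x | β < MOpE b x} := by
    intro x hx
    have h3 : lam0 + β < lam0 + MOpE b x := lt_of_lt_of_le hx (hsubadd x)
    exact (ENNReal.add_lt_add_iff_left hlam0t).1 h3
  have hlamle : rearrE volume (MOpE g) t ≤ lam0 + β :=
    sInf_le (le_trans (measure_mono hsubset) hwt)
  calc rearrE volume (MOpE g) t ≤ lam0 + β := hlamle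
    _ ≤ J + ENNReal.ofReal (2*K1) * J := add_le_add hlam0J le_rfl
    _ = (1 + ENNReal.ofReal (2*K1)) * J := by ring
    _ = ENNReal.ofReal (1 + 2*K1) * J := by
        rw [ENNReal.ofReal_add (by norm_num) (by positivity), ENNReal.ofReal_one]
    _ = ENNReal.ofReal (1 + 2*K1) * ((ENNReal.ofReal t)⁻¹ * I) := by
        rw [hJdef]
        ring

end Dim

end RieszHerz

/-- Riesz–Herz equivalence: `(Mu)*(t) ≈ u**(t)` with constants depending only on `n`. -/
theorem stmt18 (n : ℕ) (hn : 1 ≤ n) :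
    ∃ c C : ℝ, 0 < c ∧ 0 < C ∧
      ∀ u : (Fin n → ℝ) → ℝ, LocallyIntegrable u volume →
        ∀ t : ℝ, 0 < t →
          ENNReal.ofReal c *
              ((ENNReal.ofReal t)⁻¹ * ∫⁻ s in Set.Ioc (0:ℝ) t, rearr volume u s) ≤
            rearrE volume (maxOp u) t ∧
          rearrE volume (maxOp u) t ≤
            ENNReal.ofReal C *
              ((ENNReal.ofReal t)⁻¹ * ∫⁻ s in Set.Ioc (0:ℝ) t, rearr volume u s) := by
  classical
  obtain ⟨N, τ, hτ, hN⟩ :=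
    (inferInstance : HasBesicovitchCovering (Fin n → ℝ)).no_satelliteConfig
  refine ⟨(2 + (N:ℝ) * 4^n)⁻¹, 1 + 2*((N:ℝ)*2^n + 1), by positivity, by positivity, ?_⟩
  intro u hu t ht
  have hot0 : ENNReal.ofReal t ≠ 0 := (ENNReal.ofReal_pos.2 ht).ne'
  have hott : ENNReal.ofReal t ≠ ⊤ := ENNReal.ofReal_ne_top
  have hmeas := hu.aestronglyMeasurable
  set v := hmeas.mk u with hvdef
  have huv : u =ᵐ[volume] v := hmeas.ae_eq_mk
  have hveq : (fun x => ENNReal.ofReal |u x|) =ᵐ[volume] (fun x => ENNReal.ofReal |v x|) :=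
    huv.mono fun x hx => by
      show ENNReal.ofReal |u x| = ENNReal.ofReal |v x|
      rw [hx]
  have h1 : rearr volume u = rearr volume v := by
    unfold rearr
    exact RieszHerz.rearrE_congr hveq
  have h2 : rearrE volume (maxOp u)
      = rearrE volume (RieszHerz.MOpE (fun x => ENNReal.ofReal |v x|)) := by
    rw [RieszHerz.maxOp_eq, RieszHerz.MOpE_congr hveq]
  rw [h1, h2]
  set g : (Fin n → ℝ) → ENNReal := fun x => ENNReal.ofReal |v x| with hgdef
  have hvmeas : Measurable v := hmeas.measurable_mk
  have hg : Measurable g := by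
    apply ENNReal.measurable_ofReal.comp
    exact hvmeas.max hvmeas.neg
  have hloc : ∀ (x : Fin n → ℝ) (R : ℝ), (∫⁻ y in Metric.closedBall x R, g y) ≠ ⊤ := by
    intro x R
    have hsub : Metric.closedBall x R ⊆ Metric.closedBall x (max R 1) :=
      Metric.closedBall_subset_closedBall (le_max_left _ _)
    have hint : IntegrableOn u (Metric.closedBall x (max R 1)) volume :=
      hu.integrableOn_isCompact (isCompact_closedBall x _)
    have hfin : (∫⁻ y in Metric.closedBall x (max R 1), ENNReal.ofReal |u y|) < ⊤ := by
      have h3 := hint.2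
      rw [MeasureTheory.HasFiniteIntegral] at h3
      refine lt_of_le_of_lt (le_of_eq ?_) h3
      apply lintegral_congr
      intro y
      rw [← Real.enorm_eq_ofReal_abs]
    have hcongr : (∫⁻ y in Metric.closedBall x (max R 1), g y)
        = ∫⁻ y in Metric.closedBall x (max R 1), ENNReal.ofReal |u y| :=
      lintegral_congr_ae (ae_restrict_of_ae hveq.symm)
    exact ((lintegral_mono_set hsub).trans_lt (by rw [hcongr]; exact hfin)).ne
  show ENNReal.ofReal ((2 + (N:ℝ) * 4^n)⁻¹) *
          ((ENNReal.ofReal t)⁻¹ * ∫⁻ s in Set.Ioc (0:ℝ) t, rearrE volume g s) ≤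
        rearrE volume (RieszHerz.MOpE g) t ∧
      rearrE volume (RieszHerz.MOpE g) t ≤
        ENNReal.ofReal (1 + 2*((N:ℝ)*2^n + 1)) *
          ((ENNReal.ofReal t)⁻¹ * ∫⁻ s in Set.Ioc (0:ℝ) t, rearrE volume g s)
  constructor
  · -- lower bound
    have hml := RieszHerz.main_lower hn hτ hN g hg hloc ht
    have hKl0 : (0:ℝ) < 2 + (N:ℝ)*4^n := by positivity
    have el1 : ENNReal.ofReal ((2 + (N:ℝ)*4^n)⁻¹) * ENNReal.ofReal (2 + (N:ℝ)*4^n) = 1 := by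
      rw [← ENNReal.ofReal_mul (by positivity), inv_mul_cancel₀ hKl0.ne', ENNReal.ofReal_one]
    have el2 : (ENNReal.ofReal t)⁻¹ * ENNReal.ofReal t = 1 :=
      ENNReal.inv_mul_cancel hot0 hott
    calc ENNReal.ofReal ((2 + (N:ℝ)*4^n)⁻¹) *
            ((ENNReal.ofReal t)⁻¹ * ∫⁻ s in Set.Ioc (0:ℝ) t, rearrE volume g s)
        ≤ ENNReal.ofReal ((2 + (N:ℝ)*4^n)⁻¹) * ((ENNReal.ofReal t)⁻¹
            * (ENNReal.ofReal (2 + (N:ℝ)*4^n)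
              * (rearrE volume (RieszHerz.MOpE g) t * ENNReal.ofReal t))) :=
          mul_le_mul' le_rfl (mul_le_mul' le_rfl hml)
      _ = (ENNReal.ofReal ((2 + (N:ℝ)*4^n)⁻¹) * ENNReal.ofReal (2 + (N:ℝ)*4^n))
            * ((ENNReal.ofReal t)⁻¹ * ENNReal.ofReal t)
            * rearrE volume (RieszHerz.MOpE g) t := by ring
      _ = rearrE volume (RieszHerz.MOpE g) t := by rw [el1, el2, one_mul, one_mul]
  · -- upper bound
    by_cases hI0 : (∫⁻ s in Set.Ioc (0:ℝ) t, rearrE volume g s) = 0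
    · have hzero : volume {x | 0 < g x} = 0 := by
        have hρmeas : Measurable (fun s => rearrE volume g s) :=
          Antitone.measurable (RieszHerz.rearrE_anti volume g)
        have hae : (fun s => rearrE volume g s) =ᵐ[volume.restrict (Set.Ioc (0:ℝ) t)] 0 :=
          (lintegral_eq_zero_iff hρmeas).1 hI0
        have hms0 : MeasurableSet {a : ℝ | rearrE volume g a = 0} :=
          hρmeas (measurableSet_singleton 0)
        have h0' : volume ({s : ℝ | ¬ (rearrE volume g s = 0)} ∩ Set.Ioc (0:ℝ) t) = 0 := by
          have h0 := ae_iff.1 hae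
          have hceq : {s : ℝ | ¬ (rearrE volume g s = 0)} = {a : ℝ | rearrE volume g a = 0}ᶜ :=
            rfl
          rw [hceq, ← Measure.restrict_apply hms0.compl]
          simpa [Set.compl_setOf] using h0
        have hseq : ∀ k : ℕ, volume {x | 0 < g x}
            ≤ ENNReal.ofReal (min t ((1:ℝ)/((k:ℝ)+1))) := by
          intro k
          have hm0 : (0:ℝ) < min t ((1:ℝ)/((k:ℝ)+1)) := lt_min ht (by positivity)
          have hex : ∃ s, s ∈ Set.Ioc (0:ℝ) (min t ((1:ℝ)/((k:ℝ)+1)))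
              ∧ rearrE volume g s = 0 := by
            by_contra hall
            push_neg at hall
            have hsub2 : Set.Ioc (0:ℝ) (min t ((1:ℝ)/((k:ℝ)+1)))
                ⊆ {s : ℝ | ¬ (rearrE volume g s = 0)} ∩ Set.Ioc (0:ℝ) t := by
              intro s hs
              exact ⟨hall s hs, hs.1, hs.2.trans (min_le_left _ _)⟩
            have h7 := measure_mono_null hsub2 h0'
            rw [Real.volume_Ioc] at h7
            exact (ENNReal.ofReal_pos.2 (by linarith)).ne' h7
          obtain ⟨s, hsmem, hs0⟩ := hex
          have hd := RieszHerz.distr_rearrE_le volume g s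
          rw [hs0] at hd
          exact hd.trans (ENNReal.ofReal_le_ofReal hsmem.2)
        have h5 : Tendsto (fun k : ℕ => (1:ℝ)/((k:ℝ)+1)) atTop (𝓝 0) :=
          tendsto_one_div_add_atTop_nhds_zero_nat
        have h6 : Tendsto (fun k : ℕ => min t ((1:ℝ)/((k:ℝ)+1))) atTop (𝓝 (min t 0)) :=
          tendsto_const_nhds.min h5
        rw [min_eq_right ht.le] at h6
        have h8 := ENNReal.tendsto_ofReal h6
        rw [ENNReal.ofReal_zero] at h8
        exact le_antisymm (ge_of_tendsto' h8 hseq) (zero_le)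
      have hg0 : g =ᵐ[volume] (fun _ => (0:ENNReal)) := by
        rw [Filter.EventuallyEq, ae_iff]
        refine measure_mono_null ?_ hzero
        intro x hx
        exact pos_iff_ne_zero.2 hx
      have hM0 : RieszHerz.MOpE g = fun _ : Fin n → ℝ => (0:ENNReal) := by
        rw [RieszHerz.MOpE_congr hg0, RieszHerz.MOpE_zero]
      have hlam_eq : rearrE volume (RieszHerz.MOpE g) t = 0 := by
        refine le_antisymm ?_ (zero_le)
        apply sInf_le
        show volume {x | 0 < RieszHerz.MOpE g x} ≤ ENNReal.ofReal t
        rw [hM0]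
        simp
      rw [hlam_eq]
      exact zero_le
    · by_cases hItop : (∫⁻ s in Set.Ioc (0:ℝ) t, rearrE volume g s) = ⊤
      · have hrhs : ENNReal.ofReal (1 + 2*((N:ℝ)*2^n + 1))
            * ((ENNReal.ofReal t)⁻¹ * ∫⁻ s in Set.Ioc (0:ℝ) t, rearrE volume g s) = ⊤ := by
          rw [hItop, ENNReal.mul_top (ENNReal.inv_ne_zero.2 hott),
            ENNReal.mul_top ((ENNReal.ofReal_pos.2 (by positivity)).ne')]
        rw [hrhs]
        exact le_top
      · exact RieszHerz.main_upper hn hτ hN g hg ht hI0 hItop
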